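/- Let n ≥ 1, C ≥ 0, let v₋, v₊ ∈ ℝⁿ be unit vectors, and for i = 1, 2 let γᵢ : ℝ → ℝⁿ be curves and s_{i,−} ≤ s_{i,+} real numbers such that γᵢ(s) = γᵢ(s_{i,+}) + (s − s_{i,+})·v₊ for all s ≥ s_{i,+} and γᵢ(s) = γᵢ(s_{i,−}) + (s − s_{i,−})·v₋ for all s ≤ s_{i,−}, and such that the entry and exit data coincide: γ₁(s_{1,+}) = γ₂(s_{2,+}) and γ₁(s_{1,−}) = γ₂(s_{2,−}). If the total sojourn times of γ₁ and γ₂ relative to C are equal — that is, the limits along atTop ×ˢ atBot of (s, s') ↦ s − s' − √(C + ‖γᵢ(s)‖²) − √(C + ‖γᵢ(s')‖²), which exist by the eventual straightness, agree for i = 1 and i = 2 — then s_{1,+} − s_{1,−} = s_{2,+} − s_{2,−}. -/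

import Mathlib

open Filter


private lemma sqrtA {K : ℝ} (hK : 0 ≤ K) :
    Tendsto (fun t : ℝ => Real.sqrt (t ^ 2 + K) - t) atTop (nhds 0) := by
  have h0 : Tendsto (fun t : ℝ => K / (2 * t)) atTop (nhds 0) :=
    Tendsto.div_atTop tendsto_const_nhds (Tendsto.const_mul_atTop two_pos tendsto_id)
  refine squeeze_zero' ?_ ?_ h0
  · filter_upwards [eventually_gt_atTop (0 : ℝ)] with t ht
    have h1 : t ≤ Real.sqrt (t ^ 2 + K) := by
      have : Real.sqrt (t ^ 2) ≤ Real.sqrt (t ^ 2 + K) := Real.sqrt_le_sqrt (by linarith)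
      rwa [Real.sqrt_sq ht.le] at this
    linarith
  · filter_upwards [eventually_gt_atTop (0 : ℝ)] with t ht
    have hle : t ^ 2 + K ≤ (t + K / (2 * t)) ^ 2 := by
      have h2 : (t + K / (2 * t)) ^ 2 = t ^ 2 + K + (K / (2 * t)) ^ 2 := by
        field_simp; ring
      nlinarith [sq_nonneg (K / (2 * t))]
    have h3 : Real.sqrt (t ^ 2 + K) ≤ t + K / (2 * t) := by
      have := Real.sqrt_le_sqrt hle
      rwa [Real.sqrt_sq (by positivity)] at this
    linarith

private lemma lemB {n : ℕ} (C : ℝ) (hC : 0 ≤ C)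
    (v P : EuclideanSpace ℝ (Fin n)) (hv : ‖v‖ = 1) (a : ℝ) :
    Tendsto (fun s : ℝ => s - Real.sqrt (C + ‖P + (s - a) • v‖ ^ 2)) atTop
      (nhds (a - (inner ℝ P v : ℝ))) := by
  set b : ℝ := inner ℝ P v with hb
  set K : ℝ := C + ‖P‖ ^ 2 - b ^ 2 with hKdef
  have hK : 0 ≤ K := by
    have h := abs_real_inner_le_norm P v
    have h2 : |b| ≤ ‖P‖ := by rw [hv] at h; simpa using h
    nlinarith [sq_abs b, abs_nonneg b]
  have key : ∀ s : ℝ, C + ‖P + (s - a) • v‖ ^ 2 = (s - a + b) ^ 2 + K := by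
    intro s
    rw [norm_add_sq_real, real_inner_smul_right, norm_smul, Real.norm_eq_abs,
      mul_pow, sq_abs, hv]
    simp only [hKdef]
    ring
  have hshift : Tendsto (fun s : ℝ => s - a + b) atTop atTop := by
    have := tendsto_atTop_add_const_right atTop b
      (tendsto_atTop_add_const_right atTop (-a) tendsto_id)
    exact this.congr fun s => by simp [sub_eq_add_neg]
  have h := (sqrtA hK).comp hshift
  have h2 : Tendsto (fun s : ℝ => (a - b) - (Real.sqrt ((s - a + b) ^ 2 + K) - (s - a + b)))
      atTop (nhds ((a - b) - 0)) := tendsto_const_nhds.sub h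
  rw [sub_zero] at h2
  refine h2.congr fun s => ?_
  rw [key s]; ring

private lemma lemC {n : ℕ} (C : ℝ) (hC : 0 ≤ C)
    (v Q : EuclideanSpace ℝ (Fin n)) (hv : ‖v‖ = 1) (b : ℝ) :
    Tendsto (fun s : ℝ => -s - Real.sqrt (C + ‖Q + (s - b) • v‖ ^ 2)) atBot
      (nhds (-b + (inner ℝ Q v : ℝ))) := by
  have hv' : ‖-v‖ = 1 := by rwa [norm_neg]
  have h := (lemB C hC (-v) Q hv' (-b)).comp tendsto_neg_atBot_atTop
  have heq : (-b : ℝ) - (inner ℝ Q (-v) : ℝ) = -b + (inner ℝ Q v : ℝ) := by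
    rw [inner_neg_right]; ring
  rw [heq] at h
  refine h.congr fun s => ?_
  simp only [Function.comp_apply]
  have hvec : (-s - -b) • (-v) = (s - b) • v := by
    rw [smul_neg, ← neg_smul]; congr 1; ring
  rw [hvec]


/-- Core analytic step for "equal sojourn times determine equal truncated lengths":
if two curves `γ₁, γ₂` in `ℝⁿ` are straight unit-speed lines with the common direction
`vPlus` after their respective exit parameters `sᵢPlus` and with the common direction
`vMinus` before their respective entry parameters `sᵢMinus`, have coinciding entry points
`γ₁(s₁Minus) = γ₂(s₂Minus)` and coinciding exit points `γ₁(s₁Plus) = γ₂(s₂Plus)`, and have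
equal total sojourn times relative to `C` (the limits along `atTop ×ˢ atBot` of
`(s, s') ↦ s − s' − √(C + ‖γᵢ(s)‖²) − √(C + ‖γᵢ(s')‖²)`, which exist by the eventual
straightness, agree), then `s₁Plus − s₁Minus = s₂Plus − s₂Minus`. -/
theorem eq_duration_of_sojourn_eq {n : ℕ} (hn : 1 ≤ n)
    (C : ℝ) (hC : 0 ≤ C)
    (vMinus vPlus : EuclideanSpace ℝ (Fin n)) (hvm : ‖vMinus‖ = 1) (hvp : ‖vPlus‖ = 1)
    (γ₁ γ₂ : ℝ → EuclideanSpace ℝ (Fin n))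
    (s₁Minus s₁Plus s₂Minus s₂Plus : ℝ)
    (h₁ : s₁Minus ≤ s₁Plus) (h₂ : s₂Minus ≤ s₂Plus)
    (hout₁ : ∀ s, s₁Plus ≤ s → γ₁ s = γ₁ s₁Plus + (s - s₁Plus) • vPlus)
    (hin₁ : ∀ s, s ≤ s₁Minus → γ₁ s = γ₁ s₁Minus + (s - s₁Minus) • vMinus)
    (hout₂ : ∀ s, s₂Plus ≤ s → γ₂ s = γ₂ s₂Plus + (s - s₂Plus) • vPlus)
    (hin₂ : ∀ s, s ≤ s₂Minus → γ₂ s = γ₂ s₂Minus + (s - s₂Minus) • vMinus)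
    (hexit : γ₁ s₁Plus = γ₂ s₂Plus) (hentry : γ₁ s₁Minus = γ₂ s₂Minus)
    (hsojourn : ∃ 𝔗 : ℝ,
      Tendsto
        (fun p : ℝ × ℝ =>
          p.1 - p.2 - Real.sqrt (C + ‖γ₁ p.1‖ ^ 2) - Real.sqrt (C + ‖γ₁ p.2‖ ^ 2))
        (atTop ×ˢ atBot) (nhds 𝔗) ∧
      Tendsto
        (fun p : ℝ × ℝ =>
          p.1 - p.2 - Real.sqrt (C + ‖γ₂ p.1‖ ^ 2) - Real.sqrt (C + ‖γ₂ p.2‖ ^ 2))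
        (atTop ×ˢ atBot) (nhds 𝔗)) :
    s₁Plus - s₁Minus = s₂Plus - s₂Minus := by
  set P := γ₁ s₁Plus with hP
  set Q := γ₁ s₁Minus with hQ
  have hlim : ∀ (γ : ℝ → EuclideanSpace ℝ (Fin n)) (sm sp : ℝ),
      (∀ s, sp ≤ s → γ s = P + (s - sp) • vPlus) →
      (∀ s, s ≤ sm → γ s = Q + (s - sm) • vMinus) →
      Tendsto
        (fun p : ℝ × ℝ =>
          p.1 - p.2 - Real.sqrt (C + ‖γ p.1‖ ^ 2) - Real.sqrt (C + ‖γ p.2‖ ^ 2))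
        (atTop ×ˢ atBot)
        (nhds ((sp - (inner ℝ P vPlus : ℝ)) + (-sm + (inner ℝ Q vMinus : ℝ)))) := by
    intro γ sm sp hout hin
    have hTop : Tendsto (fun s : ℝ => s - Real.sqrt (C + ‖γ s‖ ^ 2)) atTop
        (nhds (sp - (inner ℝ P vPlus : ℝ))) := by
      refine Tendsto.congr' ?_ (lemB C hC vPlus P hvp sp)
      filter_upwards [eventually_ge_atTop sp] with s hs
      rw [hout s hs]
    have hBot : Tendsto (fun s : ℝ => -s - Real.sqrt (C + ‖γ s‖ ^ 2)) atBot
        (nhds (-sm + (inner ℝ Q vMinus : ℝ))) := by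
      refine Tendsto.congr' ?_ (lemC C hC vMinus Q hvm sm)
      filter_upwards [eventually_le_atBot sm] with s hs
      rw [hin s hs]
    have := (hTop.comp tendsto_fst).add (hBot.comp tendsto_snd)
    refine this.congr fun p => ?_
    simp only [Function.comp_apply]
    ring
  obtain ⟨T, hT1, hT2⟩ := hsojourn
  have hl1 := hlim γ₁ s₁Minus s₁Plus hout₁ hin₁
  have hl2 := hlim γ₂ s₂Minus s₂Plus (fun s hs => by rw [hout₂ s hs, ← hexit])
    (fun s hs => by rw [hin₂ s hs, ← hentry])
  have e1 := tendsto_nhds_unique hT1 hl1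
  have e2 := tendsto_nhds_unique hT2 hl2
  rw [e1] at e2
  linarith
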